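/- Let m ≥ 1, let n : Fin m → ℕ, let ι = Σ i : Fin m, Fin (n i), and let A_s, A_d be complex matrices indexed by ι. Suppose P_s is an invertible complex matrix indexed by ι with P_s⁻¹·A_s·P_s = blockDiagonal' D for some family D with D i an (n i)×(n i) complex matrix, and suppose the blocks have pairwise disjoint spectra: for all i ≠ j, no λ ∈ ℂ is simultaneously a root of the characteristic polynomials of D i and of D j. Then there exist a complex matrix P_d indexed by ι and a family H with H i an (n i)×(n i) complex matrix such that the dual complex matrix P̂ = P_s + P_d·ε is invertible and P̂⁻¹·(A_s + A_d·ε)·P̂ = blockDiagonal' (fun i => (D i) + (H i)·ε) as matrices over DualNumber ℂ. -/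

import Mathlib

/-- The dual complex matrix with standard part `A` and dual part `B`. -/
noncomputable def dmC {ι : Type*} (A B : Matrix ι ι ℂ) : Matrix ι ι (DualNumber ℂ) :=
  A.map TrivSqZeroExt.inl + B.map TrivSqZeroExt.inr

open Matrix Polynomial TrivSqZeroExt

section aux

variable {ι : Type*} [Fintype ι] [DecidableEq ι]

lemma dmC_fst (A B : Matrix ι ι ℂ) (i j : ι) : ((dmC A B) i j).fst = A i j := by
  simp [dmC]

lemma dmC_snd (A B : Matrix ι ι ℂ) (i j : ι) : ((dmC A B) i j).snd = B i j := by
  simp [dmC]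

lemma dmC_mul (A B C D : Matrix ι ι ℂ) :
    dmC A B * dmC C D = dmC (A * C) (A * D + B * C) := by
  ext i j
  · rw [Matrix.mul_apply, fst_sum, dmC_fst, Matrix.mul_apply]
    exact Finset.sum_congr rfl fun k _ => by rw [fst_mul, dmC_fst, dmC_fst]
  · rw [Matrix.mul_apply, snd_sum, dmC_snd, Matrix.add_apply, Matrix.mul_apply,
      Matrix.mul_apply, ← Finset.sum_add_distrib]
    refine Finset.sum_congr rfl fun k _ => ?_
    rw [snd_mul, dmC_fst, dmC_snd, dmC_fst, dmC_snd]
    simp [smul_eq_mul]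

lemma dmC_one : (dmC 1 0 : Matrix ι ι (DualNumber ℂ)) = 1 := by
  ext i j
  · rw [dmC_fst]
    by_cases h : i = j <;> simp [Matrix.one_apply, h]
  · rw [dmC_snd]
    by_cases h : i = j <;> simp [Matrix.one_apply, h]

lemma eval_charpoly' {k : ℕ} (A : Matrix (Fin k) (Fin k) ℂ) (r : ℂ) :
    A.charpoly.eval r = ((r • 1 : Matrix (Fin k) (Fin k) ℂ) - A).det := by
  rw [Matrix.charpoly, ← Polynomial.coe_evalRingHom, RingHom.map_det]
  congr 1
  ext i j
  by_cases h : i = j <;>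
    simp [charmatrix_apply, Matrix.one_apply, Matrix.diagonal_apply, h]

lemma aeval_unit {k : ℕ} (A : Matrix (Fin k) (Fin k) ℂ) (q : ℂ[X]) (hq : q.Monic)
    (h : ∀ r : ℂ, q.IsRoot r → ¬ A.charpoly.IsRoot r) : IsUnit (aeval A q) := by
  have hs : q.Splits := IsAlgClosed.splits q
  have key : ∀ s : Multiset ℂ, (∀ r ∈ s, ¬ A.charpoly.IsRoot r) →
      IsUnit (aeval A (s.map (fun r => X - C r)).prod) := by
    intro s
    induction s using Multiset.induction_on with
    | empty => intro _; simp
    | cons r s ih =>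
      intro hrs
      rw [Multiset.map_cons, Multiset.prod_cons, _root_.map_mul]
      refine IsUnit.mul ?_ (ih fun x hx => hrs x (Multiset.mem_cons_of_mem hx))
      have hnr : ¬ A.charpoly.IsRoot r := hrs r (Multiset.mem_cons_self r s)
      have hdet : ((r • 1 : Matrix (Fin k) (Fin k) ℂ) - A).det ≠ 0 := by
        rw [← eval_charpoly' A r]; exact hnr
      have hu : IsUnit ((r • 1 : Matrix (Fin k) (Fin k) ℂ) - A) :=
        (Matrix.isUnit_iff_isUnit_det _).mpr (isUnit_iff_ne_zero.mpr hdet)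
      have heq : (aeval A) (X - C r) = A - r • 1 := by
        simp [Algebra.algebraMap_eq_smul_one]
      rw [heq]
      have := hu.neg
      rwa [neg_sub] at this
  rw [hs.eq_prod_roots_of_monic hq]
  exact key q.roots fun r hr => h r (Polynomial.isRoot_of_mem_roots hr)

lemma aeval_comm {p q : ℕ} (A : Matrix (Fin p) (Fin p) ℂ) (B : Matrix (Fin q) (Fin q) ℂ)
    (Y : Matrix (Fin p) (Fin q) ℂ) (h : A * Y = Y * B) (f : ℂ[X]) :
    aeval A f * Y = Y * aeval B f := by
  have hp : ∀ k : ℕ, A ^ k * Y = Y * B ^ k := by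
    intro k
    induction k with
    | zero => simp
    | succ k ih =>
      rw [pow_succ, pow_succ, Matrix.mul_assoc, h, ← Matrix.mul_assoc, ih, Matrix.mul_assoc]
  induction f using Polynomial.induction_on' with
  | add f g hf hg => simp only [map_add, Matrix.add_mul, Matrix.mul_add, hf, hg]
  | monomial n a =>
    rw [aeval_monomial, aeval_monomial, Algebra.algebraMap_eq_smul_one,
      Algebra.algebraMap_eq_smul_one, smul_one_mul, smul_one_mul,
      Matrix.smul_mul, Matrix.mul_smul, hp n]

noncomputable def sylMap {p q : ℕ} (A : Matrix (Fin p) (Fin p) ℂ)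
    (B : Matrix (Fin q) (Fin q) ℂ) :
    Matrix (Fin p) (Fin q) ℂ →ₗ[ℂ] Matrix (Fin p) (Fin q) ℂ where
  toFun Y := A * Y - Y * B
  map_add' Y Z := by simp only [Matrix.add_mul, Matrix.mul_add]; abel
  map_smul' c Y := by simp only [RingHom.id_apply, smul_sub, Matrix.smul_mul, Matrix.mul_smul]

lemma sylvester {p q : ℕ} (A : Matrix (Fin p) (Fin p) ℂ) (B : Matrix (Fin q) (Fin q) ℂ)
    (h : ∀ lam : ℂ, ¬(A.charpoly.IsRoot lam ∧ B.charpoly.IsRoot lam))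
    (C : Matrix (Fin p) (Fin q) ℂ) : ∃ Y : Matrix (Fin p) (Fin q) ℂ, A * Y - Y * B = C := by
  have hinj : Function.Injective (sylMap A B) := by
    rw [← LinearMap.ker_eq_bot]
    rw [LinearMap.ker_eq_bot']
    intro Y hY
    have hAY : A * Y = Y * B := by
      have h0 : A * Y - Y * B = 0 := hY
      exact sub_eq_zero.mp h0
    clear hY
    have h0 : aeval A B.charpoly * Y = 0 := by
      rw [aeval_comm A B Y hAY B.charpoly, Matrix.aeval_self_charpoly, Matrix.mul_zero]
    have hu : IsUnit (aeval A B.charpoly) := by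
      refine aeval_unit A B.charpoly (Matrix.charpoly_monic B) fun r hr hAr => ?_
      exact h r ⟨hAr, hr⟩
    obtain ⟨u, hu⟩ := hu
    calc Y = ((↑u⁻¹ : Matrix (Fin p) (Fin p) ℂ) * ↑u) * Y := by rw [Units.inv_mul, Matrix.one_mul]
    _ = (↑u⁻¹ : Matrix (Fin p) (Fin p) ℂ) * (aeval A B.charpoly * Y) := by rw [Matrix.mul_assoc, hu]
    _ = 0 := by rw [h0, Matrix.mul_zero]
  obtain ⟨Y, hY⟩ := (LinearMap.injective_iff_surjective.mp hinj) C
  exact ⟨Y, by simpa [sylMap] using hY⟩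

lemma dmC_blockDiagonal' {m : ℕ} {n : Fin m → ℕ}
    (D H : ∀ i : Fin m, Matrix (Fin (n i)) (Fin (n i)) ℂ) :
    Matrix.blockDiagonal' (fun i => dmC (D i) (H i)) =
      dmC (Matrix.blockDiagonal' D) (Matrix.blockDiagonal' H) := by
  ext ⟨i, a⟩ ⟨j, b⟩
  · rw [dmC_fst]
    simp only [Matrix.blockDiagonal'_apply, apply_dite TrivSqZeroExt.fst, fst_zero, dmC_fst]
  · rw [dmC_snd]
    simp only [Matrix.blockDiagonal'_apply, apply_dite TrivSqZeroExt.snd, snd_zero, dmC_snd]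

end aux

theorem stmt7 {m : ℕ} (hm : 1 ≤ m) (n : Fin m → ℕ)
    (As Ad Ps Q : Matrix ((i : Fin m) × Fin (n i)) ((i : Fin m) × Fin (n i)) ℂ)
    (hQ1 : Ps * Q = 1) (hQ2 : Q * Ps = 1)
    (D : (i : Fin m) → Matrix (Fin (n i)) (Fin (n i)) ℂ)
    (hD : Q * As * Ps = Matrix.blockDiagonal' D)
    (hSpec : ∀ i j : Fin m, i ≠ j → ∀ lam : ℂ,
      ¬((D i).charpoly.IsRoot lam ∧ (D j).charpoly.IsRoot lam)) :
    ∃ (Pd : Matrix ((i : Fin m) × Fin (n i)) ((i : Fin m) × Fin (n i)) ℂ)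
      (H : (i : Fin m) → Matrix (Fin (n i)) (Fin (n i)) ℂ),
      IsUnit (dmC Ps Pd) ∧
        Ring.inverse (dmC Ps Pd) * dmC As Ad * dmC Ps Pd =
          Matrix.blockDiagonal' (fun i => dmC (D i) (H i)) := by
  classical
  set C : Matrix ((i : Fin m) × Fin (n i)) ((i : Fin m) × Fin (n i)) ℂ := Q * Ad * Ps with hCdef
  have hY : ∀ i j : Fin m, i ≠ j → ∃ Y : Matrix (Fin (n i)) (Fin (n j)) ℂ,
      D i * Y - Y * D j = -(Matrix.of fun a b => C ⟨i, a⟩ ⟨j, b⟩) := fun i j hij =>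
    sylvester (D i) (D j) (hSpec i j hij) _
  let Yf : ∀ i j : Fin m, Matrix (Fin (n i)) (Fin (n j)) ℂ := fun i j =>
    if h : i = j then 0 else (hY i j h).choose
  have hYf : ∀ i j (h : i ≠ j),
      D i * Yf i j - Yf i j * D j = -(Matrix.of fun a b => C ⟨i, a⟩ ⟨j, b⟩) := by
    intro i j h
    simp only [Yf, dif_neg h]
    exact (hY i j h).choose_spec
  have hYd : ∀ i, Yf i i = 0 := fun i => by simp [Yf]
  set X : Matrix ((i : Fin m) × Fin (n i)) ((i : Fin m) × Fin (n i)) ℂ :=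
    Matrix.of fun p q => Yf p.1 q.1 p.2 q.2 with hXdef
  set H : ∀ i : Fin m, Matrix (Fin (n i)) (Fin (n i)) ℂ :=
    fun i => Matrix.of fun a b => C ⟨i, a⟩ ⟨i, b⟩ with hHdef
  -- entrywise computations
  have hMX : ∀ (i j : Fin m) (a : Fin (n i)) (b : Fin (n j)),
      (Matrix.blockDiagonal' D * X) ⟨i, a⟩ ⟨j, b⟩ = (D i * Yf i j) a b := by
    intro i j a b
    rw [Matrix.mul_apply, ← Finset.univ_sigma_univ, Finset.sum_sigma]
    rw [Finset.sum_eq_single i]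
    · rw [Matrix.mul_apply]
      refine Finset.sum_congr rfl fun c _ => ?_
      rw [Matrix.blockDiagonal'_apply_eq]
      rfl
    · intro t _ ht
      refine Finset.sum_eq_zero fun c _ => ?_
      rw [Matrix.blockDiagonal'_apply_ne D a c (Ne.symm ht), zero_mul]
    · intro hi
      exact absurd (Finset.mem_univ i) hi
  have hXM : ∀ (i j : Fin m) (a : Fin (n i)) (b : Fin (n j)),
      (X * Matrix.blockDiagonal' D) ⟨i, a⟩ ⟨j, b⟩ = (Yf i j * D j) a b := by
    intro i j a b
    rw [Matrix.mul_apply, ← Finset.univ_sigma_univ, Finset.sum_sigma]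
    rw [Finset.sum_eq_single j]
    · rw [Matrix.mul_apply]
      refine Finset.sum_congr rfl fun c _ => ?_
      rw [Matrix.blockDiagonal'_apply_eq]
      rfl
    · intro t _ ht
      refine Finset.sum_eq_zero fun c _ => ?_
      rw [Matrix.blockDiagonal'_apply_ne D c b ht, mul_zero]
    · intro hj
      exact absurd (Finset.mem_univ j) hj
  have main : Matrix.blockDiagonal' D * X - X * Matrix.blockDiagonal' D + C =
      Matrix.blockDiagonal' H := by
    ext ⟨i, a⟩ ⟨j, b⟩
    rw [Matrix.add_apply, Matrix.sub_apply, hMX, hXM]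
    by_cases h : i = j
    · subst h
      rw [hYd i, Matrix.mul_zero, Matrix.zero_mul, Matrix.blockDiagonal'_apply_eq]
      simp [hHdef]
    · rw [Matrix.blockDiagonal'_apply_ne H a b h]
      have := congrFun (congrFun (hYf i j h) a) b
      rw [Matrix.sub_apply] at this
      rw [show (D i * Yf i j) a b - (Yf i j * D j) a b = -(C ⟨i, a⟩ ⟨j, b⟩) from this]
      ring
  -- the inverse
  refine ⟨Ps * X, H, ?_, ?_⟩
  all_goals {
    have h5 : Q * (Ps * X) = X := by rw [← Matrix.mul_assoc, hQ2, Matrix.one_mul]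
    have h1 : dmC Ps (Ps * X) * dmC Q (-(Q * (Ps * X) * Q)) = 1 := by
      rw [dmC_mul, hQ1]
      have e2 : Ps * -(Q * (Ps * X) * Q) + Ps * X * Q = 0 := by
        rw [Matrix.mul_neg, ← Matrix.mul_assoc, ← Matrix.mul_assoc, hQ1, Matrix.one_mul,
          neg_add_cancel]
      rw [e2, dmC_one]
    have h2 : dmC Q (-(Q * (Ps * X) * Q)) * dmC Ps (Ps * X) = 1 := by
      rw [dmC_mul, hQ2]
      have e2 : Q * (Ps * X) + -(Q * (Ps * X) * Q) * Ps = 0 := by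
        rw [Matrix.neg_mul, Matrix.mul_assoc (Q * (Ps * X)) Q Ps, hQ2, Matrix.mul_one,
          add_neg_cancel]
      rw [e2, dmC_one]
    let u : (Matrix ((i : Fin m) × Fin (n i)) ((i : Fin m) × Fin (n i)) (DualNumber ℂ))ˣ :=
      ⟨dmC Ps (Ps * X), dmC Q (-(Q * (Ps * X) * Q)), h1, h2⟩
    have hunit : IsUnit (dmC Ps (Ps * X)) := ⟨u, rfl⟩
    have hinv : Ring.inverse (dmC Ps (Ps * X)) = dmC Q (-(Q * (Ps * X) * Q)) := by
      rw [show dmC Ps (Ps * X) = (u : Matrix _ _ _) from rfl, Ring.inverse_unit]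
      rfl
    first
    | exact hunit
    | {
      rw [hinv, dmC_mul, dmC_mul, hD, dmC_blockDiagonal']
      congr 1
      have e3 : Q * As * (Ps * X) = Matrix.blockDiagonal' D * X := by
        rw [← Matrix.mul_assoc, hD]
      have e4 : -(Q * (Ps * X) * Q) * As = -(X * Q * As) := by rw [h5, Matrix.neg_mul]
      rw [e3, Matrix.add_mul, e4, Matrix.neg_mul,
        Matrix.mul_assoc (X * Q) As Ps, Matrix.mul_assoc X Q (As * Ps),
        ← Matrix.mul_assoc Q As Ps, hD]
      have main' : Matrix.blockDiagonal' D * X - X * Matrix.blockDiagonal' D + Q * Ad * Ps =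
          Matrix.blockDiagonal' H := by rw [← hCdef]; exact main
      rw [← main', sub_eq_add_neg]
      rw [← add_assoc]
      exact (add_right_comm (Matrix.blockDiagonal' D * X) (Q * Ad * Ps)
          (-(X * Matrix.blockDiagonal' D)))
    }
  }
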